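/- Let r ≥ 1 and let ξ = (ξ_0, …, ξ_r) ∈ ℝ^{r+1} with s = dim_ℚ Span_ℚ(ξ_0, …, ξ_r) − 1 ≥ 1. Then ω_0(ξ) ≥ 1/s, where ω_0(ξ) is the supremum of all ω > 0 such that there exist infinitely many tuples (q_0, …, q_r) ∈ ℤ^{r+1} with |q_i ξ_j − q_j ξ_i| ≤ max(|q_0|, …, |q_r|)^{−ω} for all 0 ≤ i < j ≤ r. -/

import Mathlib

open Filter Topology

/-- `ω_0(ξ)`: the supremum (in the extended reals) of all `ω > 0` such that there are
infinitely many integer tuples `q` with `|q_i ξ_j - q_j ξ_i| ≤ (max_k |q_k|)^{-ω}`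
for all `i < j`. -/
noncomputable def omega0 {n : ℕ} (ξ : Fin n → ℝ) : EReal :=
  sSup {x : EReal | ∃ ω : ℝ, 0 < ω ∧ x = (ω : EReal) ∧
    {q : Fin n → ℤ | ∀ i j : Fin n, i < j →
      |(q i : ℝ) * ξ j - (q j : ℝ) * ξ i| ≤
        ((Finset.univ.sup fun k => (q k).natAbs : ℕ) : ℝ) ^ (-ω)}.Infinite}

lemma dirichlet_sim {s : ℕ} (α : Fin s → ℝ) (N : ℕ) (hN : 1 ≤ N) :
    ∃ (q : ℕ) (p : Fin s → ℤ), 1 ≤ q ∧ q ≤ N ^ s ∧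
      ∀ k, |(q : ℝ) * α k - p k| ≤ 1 / N := by
  have hN0 : (0:ℝ) < N := by exact_mod_cast hN
  have hfl : ∀ (m : ℕ) (k : Fin s), (⌊(N:ℝ) * Int.fract ((m:ℝ) * α k)⌋).toNat < N := by
    intro m k
    have h1 : (N:ℝ) * Int.fract ((m:ℝ) * α k) < N := by
      nlinarith [Int.fract_lt_one ((m:ℝ) * α k), Int.fract_nonneg ((m:ℝ) * α k)]
    have h2 : ⌊(N:ℝ) * Int.fract ((m:ℝ) * α k)⌋ < (N:ℤ) := by
      exact Int.floor_lt.mpr (by exact_mod_cast h1)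
    omega
  have hcard : Fintype.card (Fin s → Fin N) < Fintype.card (Fin (N ^ s + 1)) := by
    simp
  obtain ⟨a, b, hab, hfab⟩ := Fintype.exists_ne_map_eq_of_card_lt
    (fun (m : Fin (N ^ s + 1)) (k : Fin s) =>
      (⟨(⌊(N:ℝ) * Int.fract (((m:ℕ):ℝ) * α k)⌋).toNat, hfl m k⟩ : Fin N)) hcard
  wlog hlt : (a:ℕ) < (b:ℕ) generalizing a b
  · exact this b a hab.symm hfab.symm (by
      rcases Fin.lt_or_lt_of_ne hab with h | h
      · exact absurd h hlt
      · exact h)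
  have key : ∀ k, ⌊(N:ℝ) * Int.fract (((a:ℕ):ℝ) * α k)⌋ = ⌊(N:ℝ) * Int.fract (((b:ℕ):ℝ) * α k)⌋ := by
    intro k
    have := congrFun hfab k
    have h1 : (⌊(N:ℝ) * Int.fract (((a:ℕ):ℝ) * α k)⌋).toNat
        = (⌊(N:ℝ) * Int.fract (((b:ℕ):ℝ) * α k)⌋).toNat := congrArg Fin.val this
    have ha0 : 0 ≤ ⌊(N:ℝ) * Int.fract (((a:ℕ):ℝ) * α k)⌋ :=
      Int.floor_nonneg.mpr (mul_nonneg hN0.le (Int.fract_nonneg _))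
    have hb0 : 0 ≤ ⌊(N:ℝ) * Int.fract (((b:ℕ):ℝ) * α k)⌋ :=
      Int.floor_nonneg.mpr (mul_nonneg hN0.le (Int.fract_nonneg _))
    omega
  refine ⟨(b:ℕ) - (a:ℕ), fun k => ⌊((b:ℕ):ℝ) * α k⌋ - ⌊((a:ℕ):ℝ) * α k⌋, by omega,
    by have := b.isLt; omega, ?_⟩
  intro k
  have hcast : (((b:ℕ) - (a:ℕ) : ℕ) : ℝ) = ((b:ℕ):ℝ) - ((a:ℕ):ℝ) := by
    push_cast [Nat.cast_sub hlt.le]; ring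
  have hdiff : (((b:ℕ) - (a:ℕ) : ℕ) : ℝ) * α k - ((⌊((b:ℕ):ℝ) * α k⌋ - ⌊((a:ℕ):ℝ) * α k⌋ : ℤ) : ℝ)
      = Int.fract (((b:ℕ):ℝ) * α k) - Int.fract (((a:ℕ):ℝ) * α k) := by
    rw [hcast]
    unfold Int.fract
    push_cast
    ring
  rw [hdiff]
  have habs : |(N:ℝ) * Int.fract (((b:ℕ):ℝ) * α k) - (N:ℝ) * Int.fract (((a:ℕ):ℝ) * α k)| < 1 :=
    Int.abs_sub_lt_one_of_floor_eq_floor (key k).symm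
  rw [← mul_sub] at habs
  rw [abs_mul, abs_of_pos hN0] at habs
  rw [le_div_iff₀ hN0, mul_comm]
  exact habs.le

set_option maxHeartbeats 1000000 in
lemma main_aux (r : ℕ) (ξ : Fin (r + 1) → ℝ)
    (s : ℕ) (hs : s + 1 = Module.finrank ℚ ↥(Submodule.span ℚ (Set.range ξ)))
    (hs1 : 1 ≤ s) (ω : ℝ) (hω0 : 0 < ω) (hω : ω < 1 / s) :
    {q : Fin (r+1) → ℤ | ∀ i j : Fin (r+1), i < j →
      |(q i : ℝ) * ξ j - (q j : ℝ) * ξ i| ≤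
        ((Finset.univ.sup fun k => (q k).natAbs : ℕ) : ℝ) ^ (-ω)}.Infinite := by
  have hsR : (0:ℝ) < s := by exact_mod_cast hs1
  -- ===== linear algebra setup =====
  set V := Submodule.span ℚ (Set.range ξ) with hV
  haveI : FiniteDimensional ℚ V := FiniteDimensional.span_of_finite ℚ (Set.finite_range ξ)
  let B : Module.Basis (Fin (s+1)) ℚ V := Module.finBasisOfFinrankEq ℚ V hs.symm
  set θ : Fin (s+1) → ℝ := fun k => (B k : ℝ) with hθ
  have hθli : LinearIndependent ℚ θ :=
    B.linearIndependent.map' V.subtype (Submodule.ker_subtype V)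
  have hθ0 : θ 0 ≠ 0 := hθli.ne_zero 0
  have hθ0' : (0:ℝ) < |θ 0| := abs_pos.mpr hθ0
  set c : Fin (r+1) → Fin (s+1) → ℚ :=
    fun j k => B.repr ⟨ξ j, Submodule.subset_span (Set.mem_range_self j)⟩ k with hc
  have hrepr : ∀ j, ξ j = ∑ k, (c j k : ℝ) * θ k := by
    intro j
    have h := B.sum_repr ⟨ξ j, Submodule.subset_span (Set.mem_range_self j)⟩
    have h2 := congrArg (Subtype.val) h
    rw [AddSubmonoidClass.coe_finset_sum] at h2
    simp only [SetLike.val_smul, Rat.smul_def] at h2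
    exact h2.symm
  -- ===== denominators =====
  set D : ℕ := ∏ j : Fin (r+1), ∏ k : Fin (s+1), (c j k).den with hD
  have hD1 : 1 ≤ D := by
    apply Finset.one_le_prod'
    intro j _
    exact Finset.one_le_prod' fun k _ => (c j k).pos
  have hDR : (1:ℝ) ≤ D := by exact_mod_cast hD1
  have hD0R : (0:ℝ) < D := by linarith
  have hdvd : ∀ j k, (c j k).den ∣ D := by
    intro j k
    exact Finset.dvd_prod_of_mem _ (Finset.mem_univ k) |>.trans
      (Finset.dvd_prod_of_mem (fun j => ∏ k, (c j k).den) (Finset.mem_univ j))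
  set e : Fin (r+1) → Fin (s+1) → ℤ := fun j k => (D / (c j k).den : ℕ) * (c j k).num with he
  have hec : ∀ j k, ((e j k : ℚ)) = (D : ℚ) * c j k := by
    intro j k
    have hden : ((c j k).den : ℚ) ≠ 0 := Nat.cast_ne_zero.mpr (c j k).den_nz
    have h1 : ((D / (c j k).den : ℕ) : ℚ) = (D:ℚ) / ((c j k).den : ℚ) :=
      Nat.cast_div (hdvd j k) hden
    have : ((e j k : ℚ)) = ((D / (c j k).den : ℕ) : ℚ) * ((c j k).num : ℚ) := by
      rw [he]; rw [Int.cast_mul, Int.cast_natCast]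
    rw [this, h1, div_mul_eq_mul_div, mul_div_assoc, Rat.num_div_den]
  have hecR : ∀ j k, ((e j k : ℝ)) = (D:ℝ) * ((c j k : ℚ) : ℝ) := by
    intro j k
    exact_mod_cast congrArg (fun x : ℚ => (x : ℝ)) (hec j k)
  -- ===== α and its non-integrality =====
  set α : Fin s → ℝ := fun k => θ k.succ / θ 0 with hα
  have hirr : ∀ (t : ℕ), 1 ≤ t → ∀ m : ℤ, (t:ℝ) * α ⟨0, hs1⟩ ≠ m := by
    intro t ht m hcon
    set i1 : Fin (s+1) := (⟨0, hs1⟩ : Fin s).succ with hi1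
    have h1 : (t:ℝ) * θ i1 = (m:ℝ) * θ 0 := by
      have : (t:ℝ) * (θ i1 / θ 0) = m := hcon
      field_simp at this
      linarith [this]
    have h0s : i1 ≠ 0 := Fin.succ_ne_zero _
    have hli := Fintype.linearIndependent_iff.mp hθli
      (fun k => if k = i1 then (t:ℚ) else if k = 0 then -(m:ℚ) else 0) ?_ i1
    · have ht0 : (t:ℚ) = 0 := by simpa using hli
      exact absurd ht0 (by exact_mod_cast Nat.one_le_iff_ne_zero.mp ht)
    · have hsub : ∑ k : Fin (s+1),
          (if k = i1 then (t:ℚ) else if k = 0 then -(m:ℚ) else 0) • θ k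
          = (t:ℚ) • θ i1 + (-(m:ℚ)) • θ 0 := by
        rw [← Finset.sum_subset (Finset.subset_univ {i1, (0:Fin (s+1))})]
        · rw [Finset.sum_pair h0s]
          rw [if_pos rfl, if_neg h0s.symm, if_pos rfl]
        · intro k _ hk
          simp only [Finset.mem_insert, Finset.mem_singleton] at hk
          push_neg at hk
          rw [if_neg hk.1, if_neg hk.2, zero_smul]
      rw [hsub]
      simp only [Rat.smul_def]
      push_cast
      linarith [h1]
  clear_value θ c D e α
  clear hθ hc hD he
  -- ===== constants =====
  set X : ℝ := 1 + ∑ j, |ξ j| with hX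
  have hsum0 : (0:ℝ) ≤ ∑ j, |ξ j| := Finset.sum_nonneg fun j _ => abs_nonneg (ξ j)
  have hX1 : (1:ℝ) ≤ X := by rw [hX]; linarith
  have hX0 : (0:ℝ) < X := by linarith
  have hXj : ∀ j, |ξ j| ≤ X := by
    intro j
    have := Finset.single_le_sum (f := fun j => |ξ j|) (fun j _ => abs_nonneg (ξ j))
      (Finset.mem_univ j)
    rw [hX]; linarith
  set E : ℝ := 1 + ∑ j, ∑ k, |(e j k : ℝ)| with hE
  have hesum0 : (0:ℝ) ≤ ∑ j, ∑ k, |(e j k : ℝ)| :=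
    Finset.sum_nonneg fun j _ => Finset.sum_nonneg fun k _ => abs_nonneg _
  have hE1 : (1:ℝ) ≤ E := by rw [hE]; linarith
  have hE0 : (0:ℝ) < E := by linarith
  have hEj : ∀ j, ∑ k : Fin s, |(e j (Fin.succ k) : ℝ)| ≤ E := by
    intro j
    have h1 : ∑ k : Fin s, |(e j (Fin.succ k) : ℝ)| ≤ ∑ k : Fin (s+1), |(e j k : ℝ)| := by
      rw [Fin.sum_univ_succ]
      have := abs_nonneg ((e j 0 : ℝ))
      linarith
    have h2 : ∑ k : Fin (s+1), |(e j k : ℝ)| ≤ ∑ j, ∑ k, |(e j k : ℝ)| :=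
      Finset.single_le_sum (f := fun j => ∑ k, |(e j k : ℝ)|)
        (fun j _ => Finset.sum_nonneg fun k _ => abs_nonneg _) (Finset.mem_univ j)
    rw [hE]; linarith
  set A : ℝ := (D:ℝ) * X / |θ 0| + E with hA
  have hA0 : (0:ℝ) < A := by
    have h1 : (0:ℝ) ≤ (D:ℝ) * X / |θ 0| := by positivity
    calc (0:ℝ) < E := hE0
    _ ≤ A := by rw [hA]; linarith
  clear_value X E A
  clear hX hE hsum0 hesum0
  -- some ξ j₀ ≠ 0
  have hξne : ∃ j₀, ξ j₀ ≠ 0 := by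
    by_contra hcon
    push_neg at hcon
    have hrange : Set.range ξ ⊆ {0} := by
      rintro x ⟨j, rfl⟩; exact hcon j
    have h0 : V ≤ ⊥ := by
      rw [hV]
      refine le_trans (Submodule.span_mono hrange) ?_
      rw [Submodule.span_singleton_eq_bot.mpr rfl]
    have : Module.finrank ℚ V = 0 := by
      rw [le_bot_iff.mp h0]; exact finrank_bot ℚ ℝ
    omega
  obtain ⟨j₀, hj₀⟩ := hξne
  have hj₀' : (0:ℝ) < |ξ j₀| := abs_pos.mpr hj₀
  set τ : ℝ := 1 - s * ω with hτdef
  have hτ : 0 < τ := by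
    have : ω * s < 1 := (lt_div_iff₀ hsR).mp hω
    rw [hτdef]; nlinarith
  -- ===== key existence =====
  have key : ∀ M : ℕ, ∃ Q : Fin (r+1) → ℤ,
      (∀ i j : Fin (r+1), i < j →
        |(Q i : ℝ) * ξ j - (Q j : ℝ) * ξ i| ≤
          ((Finset.univ.sup fun k => (Q k).natAbs : ℕ) : ℝ) ^ (-ω)) ∧
      M < (Finset.univ.sup fun k => (Q k).natAbs) := by
    intro M
    set M₁ : ℕ := max 1 ⌈((M:ℝ) + 1 + E) * |θ 0| / ((D:ℝ) * |ξ j₀|)⌉₊ with hM₁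
    have hM₁1 : 1 ≤ M₁ := le_max_left _ _
    have hM₁' : ((M:ℝ) + 1 + E) * |θ 0| / ((D:ℝ) * |ξ j₀|) ≤ (M₁:ℕ) := by
      refine le_trans (Nat.le_ceil _) ?_
      have h9 : ⌈((M:ℝ) + 1 + E) * |θ 0| / ((D:ℝ) * |ξ j₀|)⌉₊ ≤ M₁ := le_max_right _ _
      exact_mod_cast h9
    clear_value M₁
    have hM₁'' : (M:ℝ) + 1 + E ≤ (D:ℝ) * |ξ j₀| * M₁ / |θ 0| := by
      rw [div_le_iff₀ (mul_pos hD0R hj₀')] at hM₁'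
      rw [le_div_iff₀ hθ0']
      nlinarith [hM₁']
    -- δ : minimal distance to the integers among small multiples
    set k0 : Fin s := ⟨0, hs1⟩ with hk0
    set Γ : Finset ℕ := Finset.Icc 1 M₁ with hΓ
    have hΓne : Γ.Nonempty := ⟨1, by simp [hΓ, hM₁1]⟩
    set δ : ℝ := Γ.inf' hΓne (fun n => |(n:ℝ) * α k0 - round ((n:ℝ) * α k0)|) with hδ
    have hδ0 : 0 < δ := by
      rw [hδ, Finset.lt_inf'_iff]
      intro n hn
      rw [hΓ, Finset.mem_Icc] at hn
      rw [abs_pos, sub_ne_zero]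
      exact hirr n hn.1 _
    -- choose N
    have htend : Tendsto (fun n : ℕ => (n:ℝ) ^ τ) atTop atTop :=
      (tendsto_rpow_atTop hτ).comp tendsto_natCast_atTop_atTop
    obtain ⟨N₀, hN₀⟩ := Filter.eventually_atTop.mp
      (htend.eventually_ge_atTop (2 * X * E * A ^ ω))
    set N : ℕ := max (max 1 N₀) (⌈1/δ⌉₊ + 1) with hN
    have hN1 : 1 ≤ N := le_trans (le_max_left 1 N₀) (le_max_left _ _)
    have hNR : (0:ℝ) < N := by exact_mod_cast hN1
    have hNτ : 2 * X * E * A ^ ω ≤ (N:ℝ) ^ τ :=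
      hN₀ N (le_trans (le_max_right 1 N₀) (le_max_left _ _))
    have hNδ : 1 / (N:ℝ) < δ := by
      have h1 : (1:ℝ)/δ < N := by
        have h2 : (⌈1/δ⌉₊ + 1 : ℕ) ≤ N := le_max_right _ _
        have h3 : (1:ℝ)/δ ≤ ⌈1/δ⌉₊ := Nat.le_ceil _
        have h4 : ((⌈1/δ⌉₊ + 1 : ℕ) : ℝ) ≤ N := by exact_mod_cast h2
        push_cast at h4
        linarith
      rw [div_lt_iff₀ hNR]
      rw [div_lt_iff₀ hδ0] at h1
      linarith [h1]
    clear_value N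
    -- Dirichlet
    obtain ⟨q, p, hq1, hqN, hqp⟩ := dirichlet_sim α N hN1
    have hq0R : (0:ℝ) < q := by exact_mod_cast hq1
    have hNs1 : (1:ℝ) ≤ (N:ℝ)^s := by
      have : (1:ℕ) ≤ N ^ s := Nat.one_le_pow _ _ hN1
      exact_mod_cast this
    have hqNs : (q:ℝ) ≤ (N:ℝ)^s := by exact_mod_cast hqN
    -- q is large
    have hqM₁ : M₁ ≤ q := by
      by_contra hcon
      push_neg at hcon
      have hqΓ : q ∈ Γ := by rw [hΓ, Finset.mem_Icc]; omega
      have h1 : δ ≤ |(q:ℝ) * α k0 - round ((q:ℝ) * α k0)| :=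
        Finset.inf'_le _ hqΓ
      have h2 : |(q:ℝ) * α k0 - round ((q:ℝ) * α k0)| ≤ |(q:ℝ) * α k0 - p k0| :=
        round_le _ _
      have h3 := hqp k0
      linarith
    have hqM₁R : (M₁:ℝ) ≤ q := by exact_mod_cast hqM₁
    -- the integer vector
    set lam : ℝ := (D:ℝ) * q / θ 0 with hlam
    set Q : Fin (r+1) → ℤ := fun j => e j 0 * q + ∑ k : Fin s, e j (Fin.succ k) * p k with hQ
    clear_value lam Q
    have hkey : ∀ j, |(Q j : ℝ) - lam * ξ j| ≤ E / N := by
      intro j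
      have h1 : lam * ξ j = ∑ k : Fin (s+1), (e j k : ℝ) * ((q:ℝ) * (θ k / θ 0)) := by
        rw [hrepr j, Finset.mul_sum]
        refine Finset.sum_congr rfl fun k _ => ?_
        rw [hecR, hlam, div_eq_mul_inv, div_eq_mul_inv]
        ring
      have h2 : (Q j : ℝ) = (e j 0 : ℝ) * q + ∑ k : Fin s, (e j (Fin.succ k) : ℝ) * (p k : ℝ) := by
        rw [hQ]; push_cast; ring
      have h3 : (Q j : ℝ) - lam * ξ j
          = ∑ k : Fin s, (e j (Fin.succ k) : ℝ) * ((p k : ℝ) - (q:ℝ) * α k) := by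
        rw [h1, h2, Fin.sum_univ_succ, div_self hθ0]
        simp only [mul_sub, hα]
        rw [Finset.sum_sub_distrib]
        ring
      rw [h3]
      calc |∑ k : Fin s, (e j (Fin.succ k) : ℝ) * ((p k : ℝ) - (q:ℝ) * α k)|
          ≤ ∑ k : Fin s, |(e j (Fin.succ k) : ℝ) * ((p k : ℝ) - (q:ℝ) * α k)| :=
            Finset.abs_sum_le_sum_abs _ _
        _ ≤ ∑ k : Fin s, |(e j (Fin.succ k) : ℝ)| * (1 / N) := by
            refine Finset.sum_le_sum fun k _ => ?_
            rw [abs_mul]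
            refine mul_le_mul_of_nonneg_left ?_ (abs_nonneg _)
            rw [abs_sub_comm]
            exact hqp k
        _ = (∑ k : Fin s, |(e j (Fin.succ k) : ℝ)|) * (1 / N) := by
            rw [Finset.sum_mul]
        _ ≤ E * (1 / N) := by
            refine mul_le_mul_of_nonneg_right (hEj j) (by positivity)
        _ = E / N := by ring
    have hlamabs : |lam| = (D:ℝ) * q / |θ 0| := by
      rw [hlam, abs_div, abs_mul, Nat.abs_cast, Nat.abs_cast]
    -- lower bound at j₀
    have hlow : (M:ℝ) + 1 ≤ |(Q j₀ : ℝ)| := by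
      have h1 : |lam * ξ j₀| - |(Q j₀:ℝ) - lam * ξ j₀| ≤ |(Q j₀ : ℝ)| := by
        have h := abs_sub_abs_le_abs_sub (lam * ξ j₀) ((Q j₀:ℝ))
        rw [abs_sub_comm] at h
        linarith
      have h2 : |lam * ξ j₀| = (D:ℝ) * q / |θ 0| * |ξ j₀| := by
        rw [abs_mul, hlamabs]
      have h3 : (D:ℝ) * |ξ j₀| * M₁ / |θ 0| ≤ (D:ℝ) * q / |θ 0| * |ξ j₀| := by
        have hfac : (0:ℝ) ≤ (D:ℝ) * |ξ j₀| * |θ 0| := by positivity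
        rw [div_mul_eq_mul_div, div_le_div_iff₀ hθ0' hθ0']
        nlinarith [mul_le_mul_of_nonneg_left hqM₁R hfac]
      have h4 : E / N ≤ E := by
        rw [div_le_iff₀ hNR]
        nlinarith [hNR, hE0, hN1, (by exact_mod_cast hN1 : (1:ℝ) ≤ N)]
      have h5 := hkey j₀
      linarith [hM₁'']
    -- upper bound for all j
    have hup : ∀ j, |(Q j : ℝ)| ≤ A * (N:ℝ)^s := by
      intro j
      have h1 : |(Q j:ℝ)| ≤ |lam * ξ j| + E / N := by
        have h := abs_sub_abs_le_abs_sub ((Q j:ℝ)) (lam * ξ j)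
        have h5 := hkey j
        linarith
      have h2 : |lam * ξ j| = (D:ℝ) * q / |θ 0| * |ξ j| := by
        rw [abs_mul, hlamabs]
      have h3 : (D:ℝ) * q / |θ 0| * |ξ j| ≤ (D:ℝ) / |θ 0| * ((N:ℝ)^s * X) := by
        have h6 : (q:ℝ) * |ξ j| ≤ (N:ℝ)^s * X :=
          mul_le_mul hqNs (hXj j) (abs_nonneg _) (by positivity)
        have h7 : (0:ℝ) ≤ (D:ℝ) / |θ 0| := by positivity
        calc (D:ℝ) * q / |θ 0| * |ξ j| = (D:ℝ) / |θ 0| * ((q:ℝ) * |ξ j|) := by ring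
        _ ≤ (D:ℝ) / |θ 0| * ((N:ℝ)^s * X) := mul_le_mul_of_nonneg_left h6 h7
      have h4 : E / N ≤ E * (N:ℝ)^s := by
        have h8 : E / N ≤ E := div_le_self hE0.le (by exact_mod_cast hN1)
        have h9 : E ≤ E * (N:ℝ)^s := le_mul_of_one_le_right hE0.le hNs1
        linarith
      have h10 : (D:ℝ) / |θ 0| * ((N:ℝ)^s * X) + E * (N:ℝ)^s = A * (N:ℝ)^s := by
        rw [hA]; ring
      linarith
    -- the sup of the absolute values
    set H : ℕ := Finset.univ.sup fun k => (Q k).natAbs with hH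
    have hHcast : ∀ k, ((Q k).natAbs : ℝ) = |(Q k : ℝ)| := fun k => by
      rw [Nat.cast_natAbs, Int.cast_abs]
    have hHM : M < H := by
      have h1 : (M:ℝ) + 1 ≤ ((Q j₀).natAbs : ℝ) := by rw [hHcast]; exact hlow
      have h2 : M + 1 ≤ (Q j₀).natAbs := by exact_mod_cast h1
      have h3 : (Q j₀).natAbs ≤ H :=
        Finset.le_sup (f := fun k => (Q k).natAbs) (Finset.mem_univ j₀)
      omega
    have hH1R : (1:ℝ) ≤ (H:ℕ) := by
      have : 1 ≤ H := by omega
      exact_mod_cast this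
    have hHub : ((H:ℕ):ℝ) ≤ A * (N:ℝ)^s := by
      obtain ⟨km, -, hkm⟩ := Finset.exists_mem_eq_sup Finset.univ
        Finset.univ_nonempty (fun k => (Q k).natAbs)
      rw [hH, hkm, hHcast]
      exact hup km
    -- the approximation property
    have hbound : ∀ i jj : Fin (r+1), |(Q i:ℝ) * ξ jj - (Q jj:ℝ) * ξ i| ≤ ((H:ℕ):ℝ)^(-ω) := by
      intro i jj
      have hid : (Q i:ℝ) * ξ jj - (Q jj:ℝ) * ξ i
          = ((Q i:ℝ) - lam * ξ i) * ξ jj - ((Q jj:ℝ) - lam * ξ jj) * ξ i := by ring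
      have h1 : |(Q i:ℝ) * ξ jj - (Q jj:ℝ) * ξ i| ≤ 2 * X * E / N := by
        rw [hid]
        have ha : |((Q i:ℝ) - lam * ξ i) * ξ jj| ≤ E / N * X := by
          rw [abs_mul]
          exact mul_le_mul (hkey i) (hXj jj) (abs_nonneg _) (by positivity)
        have hb : |((Q jj:ℝ) - lam * ξ jj) * ξ i| ≤ E / N * X := by
          rw [abs_mul]
          exact mul_le_mul (hkey jj) (hXj i) (abs_nonneg _) (by positivity)
        have hc := abs_sub (((Q i:ℝ) - lam * ξ i) * ξ jj) (((Q jj:ℝ) - lam * ξ jj) * ξ i)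
        have hd : E / N * X + E / N * X = 2 * X * E / N := by ring
        linarith
      have h2 : (A * (N:ℝ)^s)^(-ω) ≤ ((H:ℕ):ℝ)^(-ω) :=
        Real.rpow_le_rpow_of_nonpos (by linarith) hHub (neg_nonpos.mpr hω0.le)
      have h3 : 2 * X * E / (N:ℝ) ≤ (A * (N:ℝ)^s)^(-ω) := by
        have hANs : (0:ℝ) < A * (N:ℝ)^s := by positivity
        rw [Real.rpow_neg hANs.le, inv_eq_one_div, div_le_div_iff₀ hNR (by positivity)]
        have hexp : (A * (N:ℝ)^s)^ω = A^ω * ((N:ℝ)^((s:ℝ)*ω)) := by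
          rw [Real.mul_rpow hA0.le (by positivity), ← Real.rpow_natCast (N:ℝ) s,
            ← Real.rpow_mul hNR.le]
        have hNone : (N:ℝ) = (N:ℝ)^((s:ℝ)*ω) * (N:ℝ)^τ := by
          rw [← Real.rpow_add hNR]
          have : (s:ℝ)*ω + τ = 1 := by rw [hτdef]; ring
          rw [this, Real.rpow_one]
        have h5 : (0:ℝ) ≤ (N:ℝ)^((s:ℝ)*ω) := (Real.rpow_pos_of_pos hNR _).le
        have h6 := mul_le_mul_of_nonneg_right hNτ h5
        rw [hexp]
        calc 2 * X * E * (A^ω * (N:ℝ)^((s:ℝ)*ω)) = 2 * X * E * A^ω * (N:ℝ)^((s:ℝ)*ω) := by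
              ring
        _ ≤ (N:ℝ)^τ * (N:ℝ)^((s:ℝ)*ω) := h6
        _ = 1 * (N:ℝ) := by
              conv_rhs => rw [hNone]
              ring
      linarith
    exact ⟨Q, fun i jj _ => hbound i jj, hHM⟩
  -- ===== wrap up: unbounded implies infinite =====
  by_contra hinf
  rw [Set.not_infinite] at hinf
  obtain ⟨M, hM⟩ := (hinf.image
    (fun Q : Fin (r+1) → ℤ => Finset.univ.sup fun k => (Q k).natAbs)).bddAbove
  obtain ⟨Q, hQS, hQM⟩ := key M
  exact absurd (hM (Set.mem_image_of_mem _ hQS)) (not_le.mpr hQM)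

theorem one_div_s_le_omega0 (r : ℕ) (hr : 1 ≤ r) (ξ : Fin (r + 1) → ℝ)
    (s : ℕ) (hs : s + 1 = Module.finrank ℚ ↥(Submodule.span ℚ (Set.range ξ)))
    (hs1 : 1 ≤ s) :
    ((1 / s : ℝ) : EReal) ≤ omega0 ξ := by
  have hsR : (0:ℝ) < s := by exact_mod_cast hs1
  refine le_of_forall_lt_imp_le_of_dense ?_
  intro a ha
  induction a using EReal.rec with
  | bot => exact bot_le
  | top => exact absurd ha (not_lt.mpr le_top)
  | coe x =>
    have hx : x < 1 / s := by exact_mod_cast ha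
    set ω : ℝ := max x (1 / (2 * s)) with hωdef
    have hω0 : 0 < ω := lt_of_lt_of_le (by positivity) (le_max_right _ _)
    have hωs : ω < 1 / s := by
      refine max_lt hx ?_
      rw [div_lt_div_iff₀ (by positivity) hsR]
      nlinarith
    have hinf := main_aux r ξ s hs hs1 ω hω0 hωs
    have hle : ((ω:ℝ):EReal) ≤ omega0 ξ := le_sSup ⟨ω, hω0, rfl, hinf⟩
    have hxω : x ≤ ω := le_max_left _ _
    calc (x:EReal) ≤ ((ω:ℝ):EReal) := EReal.coe_le_coe_iff.mpr hxω
    _ ≤ omega0 ξ := hle
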